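/- Let U_ad = {v ∈ L²(Ω) : a ≤ v(x) ≤ b a.e.} with a < b, let J : L²(Ω) → ℝ be twice continuously (Gâteaux/Fréchet) differentiable, and let ū ∈ U_ad satisfy the first-order condition J'(ū)(u − ū) ≥ 0 for all u ∈ U_ad. Suppose there exist κ > 0, α > 0, γ ∈ (0,1] such that J'(ū)(u − ū) + J''(ū)(u − ū)² ≥ κ‖u − ū‖_{L¹}^{1+1/γ} for all u ∈ U_ad with ‖u − ū‖_{L¹} < α, and suppose the second-variation continuity estimate holds: for every ε > 0 there exists δ_ε > 0 with |[J''(u_θ) − J''(ū)](u − ū)²| ≤ ε‖u − ū‖_{L¹}^{1+1/γ} whenever ‖u − ū‖_{L¹} < δ_ε, where u_θ = ū + θ(u − ū), θ ∈ [0,1] measurable. Then there exist κ' > 0 and α' > 0 such that J(u) − J(ū) ≥ κ'‖u − ū‖_{L¹}^{1+1/γ} for all u ∈ U_ad with ‖u − ū‖_{L¹} < α'; in particular ū is a strict local minimizer in the L¹ sense. -/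

import Mathlib

open MeasureTheory Real Set

/-- Under the growth condition on the first and second variations at `ubar`,
the second-variation continuity estimate, and Taylor's theorem, `ubar` is a strict local
minimizer in the `L¹` sense with the same Hölder-type growth. -/
theorem strict_local_growth
    {Ω : Type*} [MeasurableSpace Ω] (μ : Measure Ω)
    (a b : ℝ) (hab : a < b)
    (J : (Ω → ℝ) → ℝ)
    (J' : (Ω → ℝ) → (Ω → ℝ) → ℝ)    -- first directional derivative
    (J'' : (Ω → ℝ) → (Ω → ℝ) → ℝ)   -- second derivative along the repeated direction
    (Uad : Set (Ω → ℝ))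
    (hUad : Uad = {v | MemLp v 2 μ ∧ ∀ᵐ x ∂μ, a ≤ v x ∧ v x ≤ b})
    (ubar : Ω → ℝ) (hubar : ubar ∈ Uad)
    (hfoc : ∀ u ∈ Uad, 0 ≤ J' ubar (fun x => u x - ubar x))
    (κ α γ : ℝ) (hκ : 0 < κ) (hα : 0 < α) (hγ : γ ∈ Set.Ioc (0:ℝ) 1)
    (hgrowth : ∀ u ∈ Uad, (∫ x, |u x - ubar x| ∂μ) < α →
      κ * (∫ x, |u x - ubar x| ∂μ) ^ (1 + 1/γ) ≤
        J' ubar (fun x => u x - ubar x) + J'' ubar (fun x => u x - ubar x))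
    (hcont : ∀ ε > 0, ∃ δ > 0, ∀ u ∈ Uad, ∀ θ : Ω → ℝ, Measurable θ →
      (∀ x, θ x ∈ Set.Icc (0:ℝ) 1) → (∫ x, |u x - ubar x| ∂μ) < δ →
      |J'' (fun x => ubar x + θ x * (u x - ubar x)) (fun x => u x - ubar x)
        - J'' ubar (fun x => u x - ubar x)| ≤ ε * (∫ x, |u x - ubar x| ∂μ) ^ (1 + 1/γ))
    (hTaylor : ∀ u ∈ Uad, ∃ θ : Ω → ℝ, Measurable θ ∧ (∀ x, θ x ∈ Set.Icc (0:ℝ) 1) ∧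
      J u - J ubar = J' ubar (fun x => u x - ubar x)
        + (1/2) * J'' (fun x => ubar x + θ x * (u x - ubar x)) (fun x => u x - ubar x)) :
    ∃ κ' > 0, ∃ α' > 0, ∀ u ∈ Uad, (∫ x, |u x - ubar x| ∂μ) < α' →
      κ' * (∫ x, |u x - ubar x| ∂μ) ^ (1 + 1/γ) ≤ J u - J ubar := by
  obtain ⟨δ, hδ, hδcont⟩ := hcont (κ/2) (by linarith)
  refine ⟨κ/4, by linarith, min α δ, lt_min hα hδ, fun u hu hN => ?_⟩
  set N := ∫ x, |u x - ubar x| ∂μ with hNdef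
  have hNα : N < α := lt_of_lt_of_le hN (min_le_left _ _)
  have hNδ : N < δ := lt_of_lt_of_le hN (min_le_right _ _)
  obtain ⟨θ, hθm, hθ01, hTay⟩ := hTaylor u hu
  have hg := hgrowth u hu hNα
  have hfoc' := hfoc u hu
  have hc := hδcont u hu θ hθm hθ01 hNδ
  have habs := abs_le.mp hc
  have hNpow : (0:ℝ) ≤ N ^ (1 + 1/γ) := by
    apply Real.rpow_nonneg
    exact integral_nonneg fun x => abs_nonneg _
  rw [hTay]
  have h1 : J' ubar (fun x => u x - ubar x)
      + (1/2) * J'' ubar (fun x => u x - ubar x)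
      ≥ (κ/2) * N ^ (1 + 1/γ) := by
    have := hfoc'
    nlinarith [hg]
  nlinarith [habs.1, habs.2]
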